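/- For a path P_n (n ≥ 2) with minimum fixing set D = {v} where v is an end vertex: f(v;D) = ⌊n/2⌋ = F_sum(P_n), and F%(P_n) = 1/⌊n/2⌋. -/

import Mathlib

open scoped Classical

def fixesPair {V : Type*} (G : SimpleGraph V) (x u v : V) : Prop :=
  ∀ g : G ≃g G, g x = x → g u ≠ v ∧ g v ≠ u

def isFixingSet {V : Type*} (G : SimpleGraph V) (D : Set V) : Prop :=
  ∀ g : G ≃g G, (∀ v ∈ D, g v = v) → ∀ v : V, g v = v

/-- `D` is a minimum fixing set. -/
def isMinFixingSet {n : ℕ} (G : SimpleGraph (Fin n)) (D : Finset (Fin n)) : Prop :=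
  isFixingSet G ↑D ∧ ∀ E : Finset (Fin n), isFixingSet G ↑E → D.card ≤ E.card

/-- `V_s(G)`: unordered (encoded as increasing) pairs of distinct similar vertices. -/
noncomputable def VsG {n : ℕ} (G : SimpleGraph (Fin n)) : Finset (Fin n × Fin n) :=
  Finset.univ.filter (fun p => p.1 < p.2 ∧ ∃ g : G ≃g G, g p.1 = p.2)

/-- `F(x)`: the fixed neighborhood of `x`, the set of similar pairs fixed by `x`. -/
noncomputable def FxG {n : ℕ} (G : SimpleGraph (Fin n)) (x : Fin n) :
    Finset (Fin n × Fin n) :=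
  (VsG G).filter (fun p => fixesPair G x p.1 p.2)

/-- `𝓕(u,v) = {F(y) : y ∈ D, (u,v) ∈ F(y)}`. -/
noncomputable def calF {n : ℕ} (G : SimpleGraph (Fin n)) (D : Finset (Fin n))
    (p : Fin n × Fin n) : Finset (Finset (Fin n × Fin n)) :=
  (D.filter (fun y => p ∈ FxG G y)).image (FxG G)

/-- The fixing share `f(x;D) = Σ_{(u,v) ∈ F(x)} 1/|𝓕(u,v)|`. -/
noncomputable def fshare {n : ℕ} (G : SimpleGraph (Fin n)) (D : Finset (Fin n))
    (x : Fin n) : ℚ :=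
  ∑ p ∈ FxG G x, ((calF G D p).card : ℚ)⁻¹

/-- The fixing sum `F_sum(G) = Σ_{x ∈ D} f(x;D)`. -/
noncomputable def Fsum {n : ℕ} (G : SimpleGraph (Fin n)) (D : Finset (Fin n)) : ℚ :=
  ∑ x ∈ D, fshare G D x

/-- The fixing percentage `F%(G) = |D| / F_sum(G)`. -/
noncomputable def Fpct {n : ℕ} (G : SimpleGraph (Fin n)) (D : Finset (Fin n)) : ℚ :=
  (D.card : ℚ) / Fsum G D

section Aux


open SimpleGraph

/-- Reversal automorphism of the path graph. -/
def pathRev (n : ℕ) : SimpleGraph.pathGraph n ≃g SimpleGraph.pathGraph n where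
  toFun := fun i => ⟨n - 1 - i.val, by have := i.isLt; omega⟩
  invFun := fun i => ⟨n - 1 - i.val, by have := i.isLt; omega⟩
  left_inv := fun i => by have := i.isLt; ext; simp only [Fin.val_mk]; omega
  right_inv := fun i => by have := i.isLt; ext; simp only [Fin.val_mk]; omega
  map_rel_iff' := by
    intro a b
    have := a.isLt; have := b.isLt
    simp only [SimpleGraph.pathGraph_adj, Equiv.coe_fn_mk]
    omega

lemma isEnd_iff {n : ℕ} (hn : 2 ≤ n) (u : Fin n) :
    (∀ a b : Fin n, (pathGraph n).Adj u a → (pathGraph n).Adj u b → a = b) ↔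
      (u.val = 0 ∨ u.val = n - 1) := by
  constructor
  · intro h
    by_contra hc
    push_neg at hc
    have hu := u.isLt
    have h1 : (pathGraph n).Adj u ⟨u.val - 1, by omega⟩ := by
      rw [pathGraph_adj]; simp; omega
    have h2 : (pathGraph n).Adj u ⟨u.val + 1, by omega⟩ := by
      rw [pathGraph_adj]; exact Or.inl rfl
    have := h _ _ h1 h2
    rw [Fin.ext_iff] at this
    simp only [Fin.val_mk] at this; omega
  · intro h a b ha hb
    rw [pathGraph_adj] at ha hb
    have := a.isLt; have := b.isLt
    ext; omega

lemma aut_end {n : ℕ} (hn : 2 ≤ n) (g : pathGraph n ≃g pathGraph n) :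
    (g ⟨0, by have := hn; omega⟩).val = 0 ∨ (g ⟨0, by have := hn; omega⟩).val = n - 1 := by
  rw [← isEnd_iff hn]
  intro a b ha hb
  have ha' : (pathGraph n).Adj ⟨0, by have := hn; omega⟩ (g.symm a) := by
    have := g.symm.map_rel_iff.mpr ha; simpa using this
  have hb' : (pathGraph n).Adj ⟨0, by have := hn; omega⟩ (g.symm b) := by
    have := g.symm.map_rel_iff.mpr hb; simpa using this
  have : g.symm a = g.symm b := by
    have h0 := (isEnd_iff hn (⟨0, by have := hn; omega⟩ : Fin n)).2 (Or.inl rfl)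
    exact h0 _ _ ha' hb'
  simpa using congrArg g this

/-- Any automorphism is the identity or the reversal, given that `{0}` is a fixing set. -/
lemma aut_classify {n : ℕ} (hn : 2 ≤ n)
    (hD : isFixingSet (SimpleGraph.pathGraph n) {(⟨0, by have := hn; omega⟩ : Fin n)})
    (g : pathGraph n ≃g pathGraph n) :
    (∀ w, g w = w) ∨ (∀ w, g w = pathRev n w) := by
  rcases aut_end hn g with h | h
  · left
    exact hD g (by intro w hw; simp at hw; subst hw; ext; exact h)
  · right
    have hfix : ∀ w, (g.trans (pathRev n)) w = w := by
      apply hD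
      intro w hw; simp at hw; subst hw
      show pathRev n (g _) = _
      ext
      show n - 1 - (g _).val = 0
      omega
    intro w
    have := hfix w
    have h2 : pathRev n (pathRev n (g w)) = pathRev n w := congrArg (pathRev n) this
    have h3 : pathRev n (pathRev n (g w)) = g w := (pathRev n).left_inv _
    rw [← h3, h2]

lemma mem_VsG_path {n : ℕ} (hn : 2 ≤ n)
    (hD : isFixingSet (SimpleGraph.pathGraph n) {(⟨0, by have := hn; omega⟩ : Fin n)})
    (p : Fin n × Fin n) :
    p ∈ VsG (pathGraph n) ↔ p.1.val < p.2.val ∧ p.1.val + p.2.val = n - 1 := by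
  rw [VsG, Finset.mem_filter]
  simp only [Finset.mem_univ, true_and]
  constructor
  · rintro ⟨hlt, g, hg⟩
    refine ⟨hlt, ?_⟩
    rcases aut_classify hn hD g with h | h
    · rw [h] at hg; rw [hg] at hlt; exact absurd hlt (lt_irrefl _)
    · rw [h] at hg
      have := p.1.isLt
      have := congrArg Fin.val hg
      simp [pathRev] at this
      omega
  · rintro ⟨hlt, hsum⟩
    refine ⟨hlt, pathRev n, ?_⟩
    have := p.1.isLt; have := p.2.isLt
    ext
    show n - 1 - p.1.val = p.2.val
    omega

end Aux

/-- For the path `P_n` (`n ≥ 2`) with minimum fixing set `D = {v}`, `v` an end vertex: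
`f(v;D) = ⌊n/2⌋ = F_sum`, and `F% = 1/⌊n/2⌋`. -/
theorem stmt15 {n : ℕ} (hn : 2 ≤ n) (v : Fin n) (hv : v = ⟨0, by omega⟩)
    (hD : isMinFixingSet (SimpleGraph.pathGraph n) {v}) :
    fshare (SimpleGraph.pathGraph n) {v} v = ((n / 2 : ℕ) : ℚ) ∧
      Fsum (SimpleGraph.pathGraph n) {v} = ((n / 2 : ℕ) : ℚ) ∧
      Fpct (SimpleGraph.pathGraph n) {v} = 1 / ((n / 2 : ℕ) : ℚ) := by
  subst hv
  obtain ⟨hfix, -⟩ := hD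
  have hfix' : isFixingSet (SimpleGraph.pathGraph n) {(⟨0, by omega⟩ : Fin n)} := by
    intro g hg
    exact hfix g (by intro w hw; apply hg; simpa using hw)
  set v : Fin n := ⟨0, by omega⟩ with hvdef
  -- FxG v = VsG
  have hFx : FxG (SimpleGraph.pathGraph n) v = VsG (SimpleGraph.pathGraph n) := by
    apply Finset.filter_true_of_mem
    intro p hp
    rw [mem_VsG_path hn hfix'] at hp
    intro g hgv
    have hid : ∀ w, g w = w := hfix g (by intro w hw; simp at hw; subst hw; exact hgv)
    constructor
    · rw [hid]; intro h; rw [h] at hp; omega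
    · rw [hid]; intro h; rw [← h] at hp; omega
  -- card of VsG
  have hcard : (VsG (SimpleGraph.pathGraph n)).card = n / 2 := by
    rw [← Finset.card_range (n / 2)]
    apply Finset.card_bij (fun p _ => p.1.val)
    · intro p hp
      rw [mem_VsG_path hn hfix'] at hp
      simp only [Finset.mem_range]
      omega
    · intro p hp q hq h
      rw [mem_VsG_path hn hfix'] at hp hq
      have := p.1.isLt; have := q.1.isLt
      have h1 : p.1 = q.1 := Fin.ext h
      have h2 : p.2 = q.2 := Fin.ext (by omega)
      exact Prod.ext h1 h2
    · intro k hk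
      simp only [Finset.mem_range] at hk
      refine ⟨(⟨k, by omega⟩, ⟨n - 1 - k, by omega⟩), ?_, rfl⟩
      rw [mem_VsG_path hn hfix']
      simp; omega
  -- calF of any p in VsG is a singleton
  have hcal : ∀ p ∈ FxG (SimpleGraph.pathGraph n) v,
      (calF (SimpleGraph.pathGraph n) {v} p).card = 1 := by
    intro p hp
    rw [calF, Finset.filter_singleton, if_pos hp]
    simp
  have h1 : fshare (SimpleGraph.pathGraph n) {v} v = ((n / 2 : ℕ) : ℚ) := by
    have hone : ∀ p ∈ FxG (SimpleGraph.pathGraph n) v,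
        ((calF (SimpleGraph.pathGraph n) {v} p).card : ℚ)⁻¹ = 1 := by
      intro p hp; rw [hcal p hp]; norm_num
    rw [fshare, Finset.sum_congr rfl hone, Finset.sum_const, hFx, hcard]
    simp
  have h2 : Fsum (SimpleGraph.pathGraph n) {v} = ((n / 2 : ℕ) : ℚ) := by
    rw [Fsum, Finset.sum_singleton, h1]
  refine ⟨h1, h2, ?_⟩
  rw [Fpct, h2]
  simp
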